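/- Under the hypotheses of the previous cross-ratio relation (same definitions of a_0, a_d, a*_0, a*_d from θ's and φ's, ϕ's, with the stated nonvanishing conditions), each side of the cross-ratio identity equals φ_1 φ_d / (ϕ_1 ϕ_d); that is, ((a_0 − θ_0)(a_d − θ_d))/((a_0 − θ_d)(a_d − θ_0)) = φ_1 φ_d/(ϕ_1 ϕ_d). -/

import Mathlib

theorem stmt4 (F : Type*) [Field F]
    (θ0 θd θs0 θsd φ1 φd ψ1 ψd a0 ad : F)
    (h1 : θ0 ≠ θd) (h2 : θs0 ≠ θsd)
    (n1 : φ1 ≠ 0) (n2 : φd ≠ 0) (n3 : ψ1 ≠ 0) (n4 : ψd ≠ 0)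
    (h3 : φ1 ≠ ψ1) (h4 : φd ≠ ψd)
    (ha0 : a0 = (θ0 * ψ1 - θd * φ1) / (ψ1 - φ1))
    (had : ad = (θd * ψd - θ0 * φd) / (ψd - φd)) :
    ((a0 - θ0) * (ad - θd)) / ((a0 - θd) * (ad - θ0)) = φ1 * φd / (ψ1 * ψd) := by
  have d1 : ψ1 - φ1 ≠ 0 := sub_ne_zero.mpr (Ne.symm h3)
  have d2 : ψd - φd ≠ 0 := sub_ne_zero.mpr (Ne.symm h4)
  have hd : θ0 - θd ≠ 0 := sub_ne_zero.mpr h1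
  have e1 : a0 - θ0 = φ1 * (θ0 - θd) / (ψ1 - φ1) := by
    rw [ha0]; field_simp; ring
  have e2 : a0 - θd = ψ1 * (θ0 - θd) / (ψ1 - φ1) := by
    rw [ha0]; field_simp; ring
  have e3 : ad - θd = φd * (θd - θ0) / (ψd - φd) := by
    rw [had]; field_simp; ring
  have e4 : ad - θ0 = ψd * (θd - θ0) / (ψd - φd) := by
    rw [had]; field_simp; ring
  have hd' : θd - θ0 ≠ 0 := sub_ne_zero.mpr h1.symm
  rw [e1, e2, e3, e4]
  field_simp
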